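/- arXiv:1511.07559 — 6 statements merged into one kernel-verified Lean document; each statement's English description precedes it below -/
import Mathlib

section
/- Let m, M, ρ be real numbers with 0 < m ≤ M and ρ ≥ 0, and define θ := (√(ρ²(M−m)² + 4Mm) − ρ(M−m))/2. Then the two optimality ratios coincide at this threshold: (θ + ρM)/m = (M + ρθ)/θ. -/
/-- At the threshold θ, the two adversarial optimality ratios coincide:
(θ + ρM)/m = (M + ρθ)/θ. -/
theorem threshold_ratios_coincide (m M ρ θ : ℝ)
    (hm : 0 < m) (hmM : m ≤ M) (hρ : 0 ≤ ρ)
    (hθ : θ = (Real.sqrt (ρ^2 * (M - m)^2 + 4 * M * m) - ρ * (M - m)) / 2) :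
    (θ + ρ * M) / m = (M + ρ * θ) / θ := by
  have hD : 0 ≤ ρ^2 * (M - m)^2 + 4 * M * m := by nlinarith
  set s := Real.sqrt (ρ^2 * (M - m)^2 + 4 * M * m) with hs
  have hs2 : s^2 = ρ^2 * (M - m)^2 + 4 * M * m := Real.sq_sqrt hD
  have hs0 : 0 ≤ s := Real.sqrt_nonneg _
  have hgt : ρ * (M - m) < s := by nlinarith
  have hθpos : 0 < θ := by rw [hθ]; linarith
  rw [div_eq_div_iff hm.ne' hθpos.ne']
  nlinarith [hs2, hθ]
end

section
/- Let φ ≥ 1 be a real number and define CR(ρ) := (1/2)·(ρφ + ρ + √(4φ + ρ²(φ−1)²)). Then for all 0 ≤ ρ ≤ 1 it holds that √φ ≤ CR(ρ) ≤ φ + 1. -/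
/-- For ρ ∈ [0,1], the competitive ratio satisfies √φ ≤ CR(ρ) ≤ φ + 1. -/
theorem CR_bounds (φ : ℝ) (CR : ℝ → ℝ)
    (hφ : 1 ≤ φ)
    (hCR : ∀ ρ : ℝ, CR ρ = (1/2) * (ρ * φ + ρ + Real.sqrt (4 * φ + ρ^2 * (φ - 1)^2))) :
    ∀ ρ : ℝ, 0 ≤ ρ → ρ ≤ 1 → Real.sqrt φ ≤ CR ρ ∧ CR ρ ≤ φ + 1 := by
  intro ρ h0 h1
  have hφ0 : (0:ℝ) ≤ φ := by linarith
  rw [hCR]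
  constructor
  · have h2 : Real.sqrt (4 * φ) ≤ Real.sqrt (4 * φ + ρ^2 * (φ - 1)^2) := by
      apply Real.sqrt_le_sqrt; nlinarith [sq_nonneg (ρ*(φ-1))]
    have h3 : Real.sqrt (4 * φ) = 2 * Real.sqrt φ := by
      rw [show (4:ℝ) * φ = 2^2 * φ by ring, Real.sqrt_mul (by positivity),
        Real.sqrt_sq (by norm_num)]
    nlinarith [mul_nonneg h0 hφ0]
  · have h2 : Real.sqrt (4 * φ + ρ^2 * (φ - 1)^2) ≤ φ + 1 := by
      rw [show φ + 1 = Real.sqrt ((φ+1)^2) by rw [Real.sqrt_sq (by linarith)]]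
      apply Real.sqrt_le_sqrt
      nlinarith [mul_nonneg (by nlinarith : (0:ℝ) ≤ 1 - ρ^2) (sq_nonneg (φ-1))]
    nlinarith [mul_nonneg (sub_nonneg.2 h1) hφ0]
end

section
/- Let 0 < m ≤ M, 0 ≤ ρ ≤ 1 and t with m ≤ t ≤ √(Mm). Let a₁, b₁, a₂, b₂, a₃, b₃ be nonnegative reals with b₁ ≤ a₁, b₂ ≤ ρ·a₂, ρ·a₃ ≤ b₃ ≤ a₃, and set a := a₁ + a₂ + a₃, with b₁ + b₂ + b₃ = ρ·a. Define ζ₁ := (a₁−b₁)M, ξ₁ := (a₁−b₁)t, ζ₂ := (1−ρ)a₂·t + (ρa₂−b₂)M, ξ₂ := (a₂−b₂)m, ζ₃ := (1−ρ)a₃·t, ξ₃ := (a₃−b₃)m. If ξ₁ + ξ₂ + ξ₃ > 0, then (ζ₁ + ζ₂ + ζ₃)/(ξ₁ + ξ₂ + ξ₃) ≤ max{(t + ρM)/m, (M + ρt)/t}. -/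
/-- Lemma 1 of the paper: the decomposed worst-case cost ratio is bounded by
max{(t + ρM)/m, (M + ρt)/t}, where t = θ·(η_d/η_c). -/
theorem lemma_fmax (m M ρ t a₁ b₁ a₂ b₂ a₃ b₃ : ℝ)
    (hm : 0 < m) (hmM : m ≤ M) (hρ0 : 0 ≤ ρ) (hρ1 : ρ ≤ 1)
    (htm : m ≤ t) (htM : t ≤ Real.sqrt (M * m))
    (ha₁ : 0 ≤ a₁) (hb₁0 : 0 ≤ b₁) (ha₂ : 0 ≤ a₂) (hb₂0 : 0 ≤ b₂)
    (ha₃ : 0 ≤ a₃) (hb₃0 : 0 ≤ b₃)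
    (hb₁ : b₁ ≤ a₁) (hb₂ : b₂ ≤ ρ * a₂) (hb₃l : ρ * a₃ ≤ b₃) (hb₃u : b₃ ≤ a₃)
    (hsum : b₁ + b₂ + b₃ = ρ * (a₁ + a₂ + a₃))
    (hpos : 0 < (a₁ - b₁) * t + (a₂ - b₂) * m + (a₃ - b₃) * m) :
    ((a₁ - b₁) * M + ((1 - ρ) * a₂ * t + (ρ * a₂ - b₂) * M) + (1 - ρ) * a₃ * t) /
      ((a₁ - b₁) * t + (a₂ - b₂) * m + (a₃ - b₃) * m)
      ≤ max ((t + ρ * M) / m) ((M + ρ * t) / t) := by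
  have ht0 : 0 < t := lt_of_lt_of_le hm htm
  set K := max ((t + ρ * M) / m) ((M + ρ * t) / t) with hK
  have hA : M + ρ * t ≤ K * t := by
    rw [← div_le_iff₀ ht0]; exact le_max_right _ _
  have hB : t + ρ * M ≤ K * m := by
    rw [← div_le_iff₀ hm]; exact le_max_left _ _
  have hu : 0 ≤ a₁ - b₁ := by linarith
  have hv : 0 ≤ a₂ - b₂ := by nlinarith
  have hw : 0 ≤ a₃ - b₃ := by linarith
  rw [div_le_iff₀ hpos]
  have hT : (a₁ - b₁) * M + ((1 - ρ) * a₂ * t + (ρ * a₂ - b₂) * M) + (1 - ρ) * a₃ * t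
      = (a₁ - b₁) * (M + ρ * t) + (a₂ - b₂) * (t + ρ * M) + (a₃ - b₃) * t
        - ((1 - ρ) * b₁ * t + (1 - ρ) * b₂ * M) := by
    linear_combination t * hsum
  have h1 : (a₁ - b₁) * (M + ρ * t) ≤ (a₁ - b₁) * (K * t) :=
    mul_le_mul_of_nonneg_left hA hu
  have h2 : (a₂ - b₂) * (t + ρ * M) ≤ (a₂ - b₂) * (K * m) :=
    mul_le_mul_of_nonneg_left hB hv
  have h3 : (a₃ - b₃) * t ≤ (a₃ - b₃) * (K * m) := by
    have hρM : 0 ≤ ρ * M := mul_nonneg hρ0 (by linarith)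
    exact mul_le_mul_of_nonneg_left (by linarith) hw
  have hb : 0 ≤ (1 - ρ) * b₁ * t + (1 - ρ) * b₂ * M := by
    have h1ρ : (0:ℝ) ≤ 1 - ρ := by linarith
    have := mul_nonneg (mul_nonneg h1ρ hb₁0) ht0.le
    have := mul_nonneg (mul_nonneg h1ρ hb₂0) (by linarith : (0:ℝ) ≤ M)
    linarith
  rw [hT]
  nlinarith [h1, h2, h3, hb]
end

section
/- Let 0 < m ≤ M, 0 ≤ ρ ≤ 1 and t with m ≤ t ≤ √(Mm). Let a, a₁, b₁, a₃, b₃ be nonnegative reals with b₁ ≤ a₁, b₃ ≤ a₃, a₁ + a₃ = a, b₁ + b₃ = ρ·a, and b₁ ≥ a₁ − (1−ρ)a. Define ζ₁ := (a₁−b₁)M, ξ₁ := (a₁−b₁)t, ζ₃ := (1−ρ)a₃·t, ξ₃ := (a₃−b₃)m. Then (ξ₁ + ξ₃)·(M + ρt) − (ζ₁ + ζ₃)·t ≥ 0; consequently if ξ₁ + ξ₃ > 0, then (ζ₁ + ζ₃)/(ξ₁ + ξ₃) ≤ (M + ρt)/t. -/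
/-- Boundary case a₂ = 0 in the proof of Lemma 1:
(ξ₁ + ξ₃)(M + ρt) − (ζ₁ + ζ₃)t ≥ 0, hence the ratio bound. -/
theorem lemma_boundary_a2 (m M ρ t a a₁ b₁ a₃ b₃ : ℝ)
    (hm : 0 < m) (hmM : m ≤ M) (hρ0 : 0 ≤ ρ) (hρ1 : ρ ≤ 1)
    (htm : m ≤ t) (htM : t ≤ Real.sqrt (M * m))
    (ha : 0 ≤ a) (ha₁ : 0 ≤ a₁) (hb₁0 : 0 ≤ b₁) (ha₃ : 0 ≤ a₃) (hb₃0 : 0 ≤ b₃)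
    (hb₁ : b₁ ≤ a₁) (hb₃ : b₃ ≤ a₃)
    (hsuma : a₁ + a₃ = a) (hsumb : b₁ + b₃ = ρ * a)
    (hb₁lb : b₁ ≥ a₁ - (1 - ρ) * a) :
    ((a₁ - b₁) * t + (a₃ - b₃) * m) * (M + ρ * t) -
      ((a₁ - b₁) * M + (1 - ρ) * a₃ * t) * t ≥ 0
    ∧ (0 < (a₁ - b₁) * t + (a₃ - b₃) * m →
        ((a₁ - b₁) * M + (1 - ρ) * a₃ * t) /
          ((a₁ - b₁) * t + (a₃ - b₃) * m) ≤ (M + ρ * t) / t) := by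
  have ht0 : 0 < t := hm.trans_le htm
  have hMm : 0 ≤ M * m := mul_nonneg (hm.le.trans hmM) hm.le
  have ht2 : t * t ≤ M * m := by
    have := Real.mul_self_sqrt hMm
    nlinarith [ht0.le]
  have hident : ((a₁ - b₁) * t + (a₃ - b₃) * m) * (M + ρ * t) -
      ((a₁ - b₁) * M + (1 - ρ) * a₃ * t) * t
      = (1 - ρ) * b₁ * (t * t) + (a₃ - b₃) * (M * m - t * t)
        + (a₃ - b₃) * ρ * (m * t) := by
    linear_combination (t * t) * ρ * hsuma - (t * t) * hsumb
  have key : ((a₁ - b₁) * t + (a₃ - b₃) * m) * (M + ρ * t) -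
      ((a₁ - b₁) * M + (1 - ρ) * a₃ * t) * t ≥ 0 := by
    rw [hident]
    nlinarith [mul_nonneg (mul_nonneg (sub_nonneg.2 hρ1) hb₁0) (mul_pos ht0 ht0).le,
      mul_nonneg (sub_nonneg.2 hb₃) (sub_nonneg.2 ht2),
      mul_nonneg (mul_nonneg (sub_nonneg.2 hb₃) hρ0) (mul_nonneg hm.le ht0.le)]
  refine ⟨key, fun hξ => ?_⟩
  rw [div_le_div_iff₀ hξ ht0]
  nlinarith [key]
end

section
/- Let m, M, B be real numbers with 0 < m ≤ M and B > 0, and set φ := M/m. For z ∈ ℝ define g(z) := max{(z√(Mm) + m(B−z))/(mB), (z√(Mm) + M(B−z))/(√(Mm)·B)}. Then the minimum of g over z ∈ [0, B] equals (1/2)(1 + √φ), and it is attained at z = B/2. -/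
/-- In the adversarial construction of Theorem 2, the minimum over z ∈ [0,B] of the
worse of the two cost ratios equals (1/2)(1 + √φ), attained at z = B/2. -/
theorem adversary_min (m M B φ : ℝ) (g : ℝ → ℝ)
    (hm : 0 < m) (hmM : m ≤ M) (hB : 0 < B) (hφ : φ = M / m)
    (hg : ∀ z : ℝ, g z =
      max ((z * Real.sqrt (M * m) + m * (B - z)) / (m * B))
          ((z * Real.sqrt (M * m) + M * (B - z)) / (Real.sqrt (M * m) * B))) :
    (∀ z ∈ Set.Icc (0 : ℝ) B, (1/2) * (1 + Real.sqrt φ) ≤ g z)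
    ∧ g (B / 2) = (1/2) * (1 + Real.sqrt φ) := by
  have hM : 0 < M := lt_of_lt_of_le hm hmM
  have hMm : 0 < M * m := mul_pos hM hm
  set s := Real.sqrt (M * m) with hs_def
  have hs0 : 0 < s := Real.sqrt_pos.mpr hMm
  have hs2 : s * s = M * m := Real.mul_self_sqrt hMm.le
  have hsm : m ≤ s := by nlinarith [hs2, hs0, hm]
  have hsM : s ≤ M := by nlinarith [hs2, hs0, hm]
  have hφs : Real.sqrt φ = s / m := by
    have h1 : φ = (s / m) ^ 2 := by
      rw [hφ]; field_simp; nlinarith [hs2]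
    rw [h1, Real.sqrt_sq (by positivity)]
  have htarget : (1/2) * (1 + Real.sqrt φ) = (m + s) / (2 * m) := by
    rw [hφs]; field_simp
  constructor
  · intro z hz
    obtain ⟨hz0, hzB⟩ := hz
    rw [hg z, htarget]
    rcases le_total z (B / 2) with h | h
    · refine le_trans ?_ (le_max_right _ _)
      rw [div_le_div_iff₀ (by positivity) (by positivity)]
      nlinarith [mul_nonneg (mul_nonneg hm.le (sub_nonneg.2 hsM)) (by linarith : (0:ℝ) ≤ B - 2 * z), hs2]
    · refine le_trans ?_ (le_max_left _ _)
      rw [div_le_div_iff₀ (by positivity) (by positivity)]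
      nlinarith [mul_nonneg (mul_nonneg hm.le (sub_nonneg.2 hsm)) (by linarith : (0:ℝ) ≤ 2 * z - B)]
  · rw [hg, htarget]
    have e1 : (B / 2 * s + m * (B - B / 2)) / (m * B) = (m + s) / (2 * m) := by
      rw [div_eq_div_iff (by positivity) (by positivity)]; ring
    have e2 : (B / 2 * s + M * (B - B / 2)) / (s * B) = (m + s) / (2 * m) := by
      rw [div_eq_div_iff (by positivity) (by positivity)]; nlinarith [hs2]
    rw [e1, e2, max_self]
end

section
/- Let m, M, B be real numbers with 0 < m ≤ M and B > 0, and set φ := M/m. Then for every z ∈ [0, B], max{(z√(Mm) + m(B−z))/(mB), (z√(Mm) + M(B−z))/(√(Mm)·B)} ≥ (1/2)(1 + √φ). -/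
/-- Lower bound of Theorem 2: for every z ∈ [0,B], the worse of the two adversarial
cost ratios is at least (1/2)(1 + √φ). -/
theorem adversary_lower_bound (m M B φ : ℝ)
    (hm : 0 < m) (hmM : m ≤ M) (hB : 0 < B) (hφ : φ = M / m) :
    ∀ z ∈ Set.Icc (0 : ℝ) B,
      max ((z * Real.sqrt (M * m) + m * (B - z)) / (m * B))
          ((z * Real.sqrt (M * m) + M * (B - z)) / (Real.sqrt (M * m) * B))
        ≥ (1/2) * (1 + Real.sqrt φ) := by
  intro z hz
  have hM : 0 < M := lt_of_lt_of_le hm hmM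
  set s := Real.sqrt (M * m) with hs_def
  have hs2 : s ^ 2 = M * m := Real.sq_sqrt (by positivity)
  have hs : 0 < s := Real.sqrt_pos.mpr (by positivity)
  have hsqrtφ : Real.sqrt φ = s / m := by
    have h1 : φ = (M * m) / m ^ 2 := by rw [hφ]; field_simp
    rw [h1, Real.sqrt_div (by positivity), Real.sqrt_sq hm.le]
  set a := (z * s + m * (B - z)) / (m * B) with ha
  set b := (z * s + M * (B - z)) / (s * B) with hb
  have hsum : a + b = 1 + s / m := by
    rw [ha, hb]
    field_simp
    linear_combination (z - B) * hs2
  have : (1/2) * (1 + Real.sqrt φ) = (a + b) / 2 := by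
    rw [hsum, hsqrtφ]; ring
  rw [this]
  rcases le_total a b with h | h
  · calc (a + b) / 2 ≤ (b + b) / 2 := by linarith
      _ = b := by ring
      _ ≤ max a b := le_max_right a b
  · calc (a + b) / 2 ≤ (a + a) / 2 := by linarith
      _ = a := by ring
      _ ≤ max a b := le_max_left a b
end
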